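/- Stability of smoothing/prediction distributions (Lemma 4.6): For every R > 0 there exists a constant C > 0, depending only on R, ρ, N, B, m₁ and the norms ‖L_k‖_{L²(μ_prior)}, such that for every 1 ≤ j ≤ N, every τ ∈ [0,T], and all y_{1:j}, y'_{1:j} ∈ (ℝ^d)^j with (Σ_{k=1}^j |y_k|_Γ²)^{1/2} ≤ R and (Σ_{k=1}^j |y'_k|_Γ²)^{1/2} ≤ R, one has W1(ν^{y_{1:j}}_τ, ν^{y'_{1:j}}_τ) ≤ C (Σ_{k=1}^j |y_k − y'_k|_Γ²)^{1/2}; consequently, for every t, δt ≥ 0 with t + δt ≤ T, ∫_t^{t+δt} W1(ν^{y_{1:j}}_τ, ν^{y'_{1:j}}_τ) dτ ≤ C · δt · (Σ_{k=1}^j |y_k − y'_k|_Γ²)^{1/2}. -/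

import Mathlib

open MeasureTheory
open scoped BigOperators ENNReal Matrix

noncomputable section

/-- The Γ-weighted norm `|y|_Γ = sqrt ⟨y, Γ⁻¹ y⟩` on `ℝ^d`. -/
def gammaNorm {d : ℕ} (Γ : Matrix (Fin d) (Fin d) ℝ) (y : Fin d → ℝ) : ℝ :=
  Real.sqrt (y ⬝ᵥ (Γ⁻¹).mulVec y)

/-- The Γ-norm of a tuple of measurements: `(Σ_k |y_k|_Γ²)^{1/2}`. -/
def gammaNormTuple {d N : ℕ} (Γ : Matrix (Fin d) (Fin d) ℝ) (y : Fin N → Fin d → ℝ) : ℝ :=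
  Real.sqrt (∑ k, (gammaNorm Γ (y k)) ^ 2)

/-- A noise density satisfying (N.1)–(N.3). -/
structure IsNoiseDensity {d : ℕ} (Γ : Matrix (Fin d) (Fin d) ℝ) (ρ : (Fin d → ℝ) → ℝ)
    (Lρ Cb Ct : ℝ) : Prop where
  Lρ_pos : 0 < Lρ
  Cb_pos : 0 < Cb
  Ct_pos : 0 < Ct
  pos : ∀ y, 0 < ρ y
  lip : ∀ y y', |ρ y - ρ y'| ≤ Lρ * gammaNorm Γ (y - y')
  bdd : ∀ y, ρ y ≤ Cb
  tail : ∀ y, Ct⁻¹ * Real.exp (-(1 / 2) * (gammaNorm Γ y) ^ 2) ≤ ρ y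

/-- Wasserstein-1 distance in Kantorovich–Rubinstein dual form. -/
def W1 {X : Type*} [NormedAddCommGroup X] [MeasurableSpace X] (μ ν : Measure X) : ℝ :=
  sSup {r : ℝ | ∃ Φ : X → ℝ, LipschitzWith 1 Φ ∧ Φ 0 = 0 ∧
    r = (∫ u, Φ u ∂μ) - ∫ u, Φ u ∂ν}

/-- Unnormalized posterior density given the first `k` measurements. -/
def postDensity {X : Type*} {d N : ℕ} (ρ : (Fin d → ℝ) → ℝ)
    (L : Fin N → X → Fin d → ℝ) (y : Fin N → Fin d → ℝ) (k : ℕ) (u : X) : ℝ :=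
  ∏ j ∈ Finset.univ.filter (fun j : Fin N => (j : ℕ) < k), ρ (y j - L j u)

/-- Normalization constant `Z_k(y_{1:k})`. -/
def postZ {X : Type*} [MeasurableSpace X] {d N : ℕ} (μp : Measure X) (ρ : (Fin d → ℝ) → ℝ)
    (L : Fin N → X → Fin d → ℝ) (y : Fin N → Fin d → ℝ) (k : ℕ) : ℝ :=
  ∫ u, postDensity ρ L y k u ∂μp

/-- Bayesian posterior `μ^{y_{1:k}}` on the initial data. -/
def posteriorK {X : Type*} [MeasurableSpace X] {d N : ℕ} (μp : Measure X)
    (ρ : (Fin d → ℝ) → ℝ) (L : Fin N → X → Fin d → ℝ) (y : Fin N → Fin d → ℝ) (k : ℕ) :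
    Measure X :=
  μp.withDensity fun u => ENNReal.ofReal (postDensity ρ L y k u / postZ μp ρ L y k)

/-- The number of measurement times `t_j` (j = 1, …, N) with `t_j ≤ t`; for
`t ∈ [t_k, t_{k+1})` this equals `k`, and it equals `N` for `t = t_N = T`. -/
def numObs {N : ℕ} (ts : Fin (N + 1) → ℝ) (t : ℝ) : ℕ :=
  (Finset.univ.filter (fun j : Fin N => ts j.succ ≤ t)).card

/-- The filtering distribution `ν^y_t = (S_t)_# μ^{y_{1:k}}` for `t ∈ [t_k, t_{k+1})`. -/
def filteringDist {X : Type*} [MeasurableSpace X] {d N : ℕ} (μp : Measure X)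
    (ρ : (Fin d → ℝ) → ℝ) (ts : Fin (N + 1) → ℝ) (S : ℝ → X → X)
    (L : Fin N → X → Fin d → ℝ) (y : Fin N → Fin d → ℝ) (t : ℝ) : Measure X :=
  (posteriorK μp ρ L y (numObs ts t)).map (S t)


lemma gammaNorm_nonneg {d : ℕ} (Γ : Matrix (Fin d) (Fin d) ℝ) (y : Fin d → ℝ) :
    0 ≤ gammaNorm Γ y := Real.sqrt_nonneg _

lemma psd_apply {d : ℕ} {M : Matrix (Fin d) (Fin d) ℝ} (hM : M.PosSemidef) (x : Fin d → ℝ) :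
    0 ≤ x ⬝ᵥ M.mulVec x := by simpa using hM.dotProduct_mulVec_nonneg x

lemma sq_gammaNorm {d : ℕ} {Γ : Matrix (Fin d) (Fin d) ℝ} (hΓ : Γ.PosDef) (y : Fin d → ℝ) :
    (gammaNorm Γ y) ^ 2 = y ⬝ᵥ (Γ⁻¹).mulVec y :=
  Real.sq_sqrt (psd_apply hΓ.inv.posSemidef y)

lemma gammaNorm_sub_sq_le {d : ℕ} {Γ : Matrix (Fin d) (Fin d) ℝ} (hΓ : Γ.PosDef)
    (a b : Fin d → ℝ) :
    (gammaNorm Γ (a - b)) ^ 2 ≤ 2 * (gammaNorm Γ a) ^ 2 + 2 * (gammaNorm Γ b) ^ 2 := by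
  have h1 := psd_apply hΓ.inv.posSemidef (a + b)
  rw [sq_gammaNorm hΓ, sq_gammaNorm hΓ, sq_gammaNorm hΓ]
  have e : (a - b) ⬝ᵥ (Γ⁻¹).mulVec (a - b) + (a + b) ⬝ᵥ (Γ⁻¹).mulVec (a + b)
      = 2 * (a ⬝ᵥ (Γ⁻¹).mulVec a) + 2 * (b ⬝ᵥ (Γ⁻¹).mulVec b) := by
    simp [Matrix.mulVec_add, Matrix.mulVec_sub, dotProduct_add, dotProduct_sub,
      add_dotProduct, sub_dotProduct]
    ring
  linarith

lemma continuous_gammaNorm {d : ℕ} (Γ : Matrix (Fin d) (Fin d) ℝ) :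
    Continuous (gammaNorm Γ) := by
  apply Real.continuous_sqrt.comp
  simp only [dotProduct, Matrix.mulVec]
  fun_prop

lemma gammaNorm_zero {d : ℕ} (Γ : Matrix (Fin d) (Fin d) ℝ) : gammaNorm Γ 0 = 0 := by
  simp [gammaNorm]

lemma continuous_of_lip {d : ℕ} {Γ : Matrix (Fin d) (Fin d) ℝ} {ρ : (Fin d → ℝ) → ℝ} {Lρ : ℝ}
    (h : ∀ y y', |ρ y - ρ y'| ≤ Lρ * gammaNorm Γ (y - y')) : Continuous ρ := by
  rw [continuous_iff_continuousAt]
  intro y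
  have hb : Filter.Tendsto (fun y' => Lρ * gammaNorm Γ (y' - y)) (nhds y) (nhds 0) := by
    have hc : Continuous (fun y' : Fin d → ℝ => Lρ * gammaNorm Γ (y' - y)) :=
      continuous_const.mul ((continuous_gammaNorm Γ).comp (continuous_id.sub continuous_const))
    simpa [gammaNorm_zero] using hc.tendsto y
  have h2 : Filter.Tendsto (fun y' => ρ y' - ρ y) (nhds y) (nhds 0) := by
    apply squeeze_zero_norm (fun y' => ?_) hb
    simpa [Real.norm_eq_abs] using h y' y
  have h3 := h2.add_const (ρ y)
  simpa [ContinuousAt] using h3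

lemma prod_sub_prod_le {ι : Type*} [DecidableEq ι] (s : Finset ι) (f g : ι → ℝ) (M : ℝ)
    (hM : 1 ≤ M) (hf : ∀ i ∈ s, 0 ≤ f i ∧ f i ≤ M) (hg : ∀ i ∈ s, 0 ≤ g i ∧ g i ≤ M) :
    |∏ i ∈ s, f i - ∏ i ∈ s, g i| ≤ M ^ s.card * ∑ i ∈ s, |f i - g i| := by
  induction s using Finset.induction_on with
  | empty => simp
  | @insert a s ha ih =>
    have hfa := hf a (Finset.mem_insert_self a s)
    have hga := hg a (Finset.mem_insert_self a s)
    have hf' : ∀ i ∈ s, 0 ≤ f i ∧ f i ≤ M := fun i hi => hf i (Finset.mem_insert_of_mem hi)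
    have hg' : ∀ i ∈ s, 0 ≤ g i ∧ g i ≤ M := fun i hi => hg i (Finset.mem_insert_of_mem hi)
    have ih' := ih hf' hg'
    rw [Finset.prod_insert ha, Finset.prod_insert ha, Finset.sum_insert ha,
      Finset.card_insert_of_notMem ha]
    have hPf : 0 ≤ ∏ i ∈ s, f i := Finset.prod_nonneg fun i hi => (hf' i hi).1
    have hPfM : ∏ i ∈ s, f i ≤ M ^ s.card := by
      calc ∏ i ∈ s, f i ≤ ∏ _i ∈ s, M := Finset.prod_le_prod (fun i hi => (hf' i hi).1)
            (fun i hi => (hf' i hi).2)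
        _ = M ^ s.card := by rw [Finset.prod_const]
    have key : |f a * ∏ i ∈ s, f i - g a * ∏ i ∈ s, g i|
        ≤ |f a - g a| * ∏ i ∈ s, f i + g a * |∏ i ∈ s, f i - ∏ i ∈ s, g i| := by
      have : f a * ∏ i ∈ s, f i - g a * ∏ i ∈ s, g i
          = (f a - g a) * ∏ i ∈ s, f i + g a * (∏ i ∈ s, f i - ∏ i ∈ s, g i) := by ring
      rw [this]
      calc _ ≤ |(f a - g a) * ∏ i ∈ s, f i| + |g a * (∏ i ∈ s, f i - ∏ i ∈ s, g i)| :=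
            abs_add_le _ _
        _ = |f a - g a| * ∏ i ∈ s, f i + g a * |∏ i ∈ s, f i - ∏ i ∈ s, g i| := by
            rw [abs_mul, abs_mul, abs_of_nonneg hPf, abs_of_nonneg hga.1]
    have hMpow : (1:ℝ) ≤ M ^ s.card := one_le_pow₀ hM
    have t1 : |f a - g a| * ∏ i ∈ s, f i ≤ M ^ (s.card + 1) * |f a - g a| := by
      calc |f a - g a| * ∏ i ∈ s, f i ≤ |f a - g a| * M ^ s.card :=
            mul_le_mul_of_nonneg_left hPfM (abs_nonneg _)
        _ ≤ M ^ (s.card + 1) * |f a - g a| := by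
            rw [pow_succ, mul_comm (|f a - g a|) (M ^ s.card)]
            exact mul_le_mul_of_nonneg_right
              (le_mul_of_one_le_right (pow_nonneg (le_trans zero_le_one hM) _) hM)
              (abs_nonneg _)
    have t2 : g a * |∏ i ∈ s, f i - ∏ i ∈ s, g i|
        ≤ M ^ (s.card + 1) * ∑ i ∈ s, |f i - g i| := by
      calc g a * |∏ i ∈ s, f i - ∏ i ∈ s, g i| ≤ M * (M ^ s.card * ∑ i ∈ s, |f i - g i|) := by
            apply mul_le_mul hga.2 ih' (abs_nonneg _) (le_trans zero_le_one hM)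
        _ = M ^ (s.card + 1) * ∑ i ∈ s, |f i - g i| := by rw [pow_succ]; ring
    calc _ ≤ |f a - g a| * ∏ i ∈ s, f i + g a * |∏ i ∈ s, f i - ∏ i ∈ s, g i| := key
      _ ≤ M ^ (s.card + 1) * |f a - g a| + M ^ (s.card + 1) * ∑ i ∈ s, |f i - g i| :=
          add_le_add t1 t2
      _ = M ^ (s.card + 1) * (|f a - g a| + ∑ i ∈ s, |f i - g i|) := by ring


section Helpers

variable {X : Type*} [MeasurableSpace X] {d N : ℕ}
  {Γ : Matrix (Fin d) (Fin d) ℝ} {ρ : (Fin d → ℝ) → ℝ} {Lρ Cb Ct : ℝ}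
  {L : Fin N → X → Fin d → ℝ}

lemma pd_meas (hρc : Continuous ρ) (hLmeas : ∀ k, Measurable (L k))
    (y : Fin N → Fin d → ℝ) (j : ℕ) : Measurable (postDensity ρ L y j) := by
  apply Finset.measurable_prod
  intro k _
  exact hρc.measurable.comp (measurable_const.sub (hLmeas k))

lemma pd_pos (hρ : IsNoiseDensity Γ ρ Lρ Cb Ct) (y : Fin N → Fin d → ℝ) (j : ℕ) (u : X) :
    0 < postDensity ρ L y j u :=
  Finset.prod_pos fun k _ => hρ.pos _

lemma filter_card_le (j : ℕ) :
    (Finset.univ.filter (fun k : Fin N => (k : ℕ) < j)).card ≤ N :=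
  le_trans (Finset.card_filter_le _ _) (by simp)

lemma pd_le (hρ : IsNoiseDensity Γ ρ Lρ Cb Ct) (y : Fin N → Fin d → ℝ) (j : ℕ) (u : X) :
    postDensity ρ L y j u ≤ (max 1 Cb) ^ N := by
  set M := max 1 Cb with hMdef
  have hM1 : (1:ℝ) ≤ M := le_max_left _ _
  calc postDensity ρ L y j u
      ≤ ∏ _k ∈ Finset.univ.filter (fun k : Fin N => (k : ℕ) < j), M :=
        Finset.prod_le_prod (fun k _ => (hρ.pos _).le)
          (fun k _ => le_trans (hρ.bdd _) (le_max_right _ _))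
    _ = M ^ (Finset.univ.filter (fun k : Fin N => (k : ℕ) < j)).card := Finset.prod_const M
    _ ≤ M ^ N := pow_le_pow_right₀ hM1 (filter_card_le j)

lemma pd_diff (hΓ : Γ.PosDef) (hρ : IsNoiseDensity Γ ρ Lρ Cb Ct)
    (y y' : Fin N → Fin d → ℝ) (j : ℕ) (u : X) :
    |postDensity ρ L y j u - postDensity ρ L y' j u|
      ≤ Lρ * N * (max 1 Cb) ^ N *
        Real.sqrt (∑ k ∈ Finset.univ.filter (fun k : Fin N => (k : ℕ) < j),
          (gammaNorm Γ (y k - y' k)) ^ 2) := by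
  classical
  set M := max 1 Cb with hMdef
  have hM1 : (1:ℝ) ≤ M := le_max_left _ _
  set F := Finset.univ.filter (fun k : Fin N => (k : ℕ) < j) with hF
  set s := Real.sqrt (∑ k ∈ F, (gammaNorm Γ (y k - y' k)) ^ 2) with hs
  have hs0 : 0 ≤ s := Real.sqrt_nonneg _
  have hbd : ∀ k ∈ F, |ρ (y k - L k u) - ρ (y' k - L k u)| ≤ Lρ * s := by
    intro k hk
    have h1 := hρ.lip (y k - L k u) (y' k - L k u)
    have h2 : (y k - L k u) - (y' k - L k u) = y k - y' k := sub_sub_sub_cancel_right _ _ _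
    rw [h2] at h1
    refine h1.trans (mul_le_mul_of_nonneg_left ?_ hρ.Lρ_pos.le)
    have hterm : (gammaNorm Γ (y k - y' k)) ^ 2 ≤ ∑ i ∈ F, (gammaNorm Γ (y i - y' i)) ^ 2 :=
      Finset.single_le_sum (f := fun i => (gammaNorm Γ (y i - y' i)) ^ 2)
        (fun i _ => sq_nonneg _) hk
    calc gammaNorm Γ (y k - y' k)
        = Real.sqrt ((gammaNorm Γ (y k - y' k)) ^ 2) :=
          (Real.sqrt_sq (gammaNorm_nonneg Γ _)).symm
      _ ≤ s := Real.sqrt_le_sqrt hterm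
  have h3 := prod_sub_prod_le F (fun k => ρ (y k - L k u)) (fun k => ρ (y' k - L k u)) M hM1
    (fun k _ => ⟨(hρ.pos _).le, le_trans (hρ.bdd _) (le_max_right _ _)⟩)
    (fun k _ => ⟨(hρ.pos _).le, le_trans (hρ.bdd _) (le_max_right _ _)⟩)
  have h4 : ∑ k ∈ F, |ρ (y k - L k u) - ρ (y' k - L k u)| ≤ F.card * (Lρ * s) := by
    calc ∑ k ∈ F, |ρ (y k - L k u) - ρ (y' k - L k u)| ≤ ∑ _k ∈ F, Lρ * s :=
          Finset.sum_le_sum hbd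
      _ = F.card * (Lρ * s) := by rw [Finset.sum_const, nsmul_eq_mul]
  have hMpow : (0:ℝ) ≤ M ^ F.card := pow_nonneg (le_trans zero_le_one hM1) _
  calc |postDensity ρ L y j u - postDensity ρ L y' j u|
      ≤ M ^ F.card * ∑ k ∈ F, |ρ (y k - L k u) - ρ (y' k - L k u)| := h3
    _ ≤ M ^ F.card * (F.card * (Lρ * s)) := mul_le_mul_of_nonneg_left h4 hMpow
    _ ≤ M ^ N * (N * (Lρ * s)) := by
        apply mul_le_mul (pow_le_pow_right₀ hM1 (filter_card_le j)) ?_ ?_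
          (pow_nonneg (le_trans zero_le_one hM1) _)
        · apply mul_le_mul_of_nonneg_right _ (mul_nonneg hρ.Lρ_pos.le hs0)
          exact_mod_cast Nat.cast_le.mpr (filter_card_le j)
        · have := mul_nonneg hρ.Lρ_pos.le hs0
          positivity
    _ = Lρ * N * M ^ N * s := by ring

end Helpers


section Helpers2

variable {X : Type*} [MeasurableSpace X] {d N : ℕ}
  {Γ : Matrix (Fin d) (Fin d) ℝ} {ρ : (Fin d → ℝ) → ℝ} {Lρ Cb Ct : ℝ}
  {L : Fin N → X → Fin d → ℝ}

lemma fN_meas (hLmeas : ∀ k, Measurable (L k)) :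
    Measurable (fun u => ∑ k, (gammaNorm Γ (L k u)) ^ 2) := by
  apply Finset.measurable_sum
  intro k _
  exact (((continuous_gammaNorm Γ).measurable.comp (hLmeas k)).pow_const 2)

lemma postZ_ge (hΓ : Γ.PosDef) (hρ : IsNoiseDensity Γ ρ Lρ Cb Ct)
    (μp : Measure X) [IsProbabilityMeasure μp]
    (hLmeas : ∀ k, Measurable (L k))
    (hL2 : ∀ k, Integrable (fun u => (gammaNorm Γ (L k u)) ^ 2) μp)
    (j : ℕ) (R : ℝ) (y : Fin N → Fin d → ℝ)
    (hy : Real.sqrt (∑ k ∈ Finset.univ.filter (fun k : Fin N => (k : ℕ) < j),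
        (gammaNorm Γ (y k)) ^ 2) ≤ R) :
    (min 1 Ct⁻¹) ^ N * Real.exp (-(R ^ 2)) *
      (Real.exp (-(2 * ((∫ u, ∑ k, (gammaNorm Γ (L k u)) ^ 2 ∂μp) + 1))) / 2)
      ≤ postZ μp ρ L y j := by
  classical
  have hρc : Continuous ρ := continuous_of_lip hρ.lip
  set F := Finset.univ.filter (fun k : Fin N => (k : ℕ) < j) with hF
  set fN : X → ℝ := fun u => ∑ k, (gammaNorm Γ (L k u)) ^ 2 with hfN
  have hfNmeas : Measurable fN := fN_meas hLmeas
  have hfNnn : ∀ u, 0 ≤ fN u := fun u => Finset.sum_nonneg fun k _ => sq_nonneg _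
  have hfNint : Integrable fN μp := integrable_finset_sum _ fun k _ => hL2 k
  set Mf := ∫ u, fN u ∂μp with hMf
  have hMfnn : 0 ≤ Mf := integral_nonneg fun u => hfNnn u
  set a : ℝ := 2 * (Mf + 1) with ha
  have ha0 : 0 < a := by positivity
  set c0 : ℝ := (min 1 Ct⁻¹) ^ N with hc0
  have hm0 : 0 < min 1 Ct⁻¹ := lt_min one_pos (inv_pos.mpr hρ.Ct_pos)
  have hc00 : 0 < c0 := pow_pos hm0 _
  -- sum of |y_k|² bounded by R²
  have hySq : ∑ k ∈ F, (gammaNorm Γ (y k)) ^ 2 ≤ R ^ 2 := by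
    have h0 : 0 ≤ ∑ k ∈ F, (gammaNorm Γ (y k)) ^ 2 :=
      Finset.sum_nonneg fun k _ => sq_nonneg _
    have := pow_le_pow_left₀ (Real.sqrt_nonneg _) hy 2
    rwa [Real.sq_sqrt h0] at this
  -- pointwise lower bound on the density
  have hglow : ∀ u, c0 * Real.exp (-(R ^ 2) - fN u) ≤ postDensity ρ L y j u := by
    intro u
    have h_each : ∀ k ∈ F,
        Ct⁻¹ * Real.exp (-((gammaNorm Γ (y k)) ^ 2 + (gammaNorm Γ (L k u)) ^ 2))
          ≤ ρ (y k - L k u) := by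
      intro k _
      refine le_trans ?_ (hρ.tail (y k - L k u))
      apply mul_le_mul_of_nonneg_left _ (inv_pos.mpr hρ.Ct_pos).le
      apply Real.exp_le_exp.mpr
      have := gammaNorm_sub_sq_le hΓ (y k) (L k u)
      linarith
    have hprod : ∏ k ∈ F,
        (Ct⁻¹ * Real.exp (-((gammaNorm Γ (y k)) ^ 2 + (gammaNorm Γ (L k u)) ^ 2)))
          ≤ postDensity ρ L y j u :=
      Finset.prod_le_prod
        (fun k _ => mul_nonneg (inv_pos.mpr hρ.Ct_pos).le (Real.exp_pos _).le) h_each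
    have heq : ∏ k ∈ F,
        (Ct⁻¹ * Real.exp (-((gammaNorm Γ (y k)) ^ 2 + (gammaNorm Γ (L k u)) ^ 2)))
        = Ct⁻¹ ^ F.card *
          Real.exp (∑ k ∈ F, -((gammaNorm Γ (y k)) ^ 2 + (gammaNorm Γ (L k u)) ^ 2)) := by
      rw [Finset.prod_mul_distrib, Finset.prod_const, Real.exp_sum]
    have hcoef : c0 ≤ Ct⁻¹ ^ F.card := by
      calc c0 ≤ (min 1 Ct⁻¹) ^ F.card :=
            pow_le_pow_of_le_one hm0.le (min_le_left _ _) (filter_card_le j)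
        _ ≤ Ct⁻¹ ^ F.card := pow_le_pow_left₀ hm0.le (min_le_right _ _) _
    have hexp : Real.exp (-(R ^ 2) - fN u)
        ≤ Real.exp (∑ k ∈ F, -((gammaNorm Γ (y k)) ^ 2 + (gammaNorm Γ (L k u)) ^ 2)) := by
      apply Real.exp_le_exp.mpr
      have hsplit : ∑ k ∈ F, -((gammaNorm Γ (y k)) ^ 2 + (gammaNorm Γ (L k u)) ^ 2)
          = -((∑ k ∈ F, (gammaNorm Γ (y k)) ^ 2) + ∑ k ∈ F, (gammaNorm Γ (L k u)) ^ 2) := by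
        rw [← Finset.sum_add_distrib, ← Finset.sum_neg_distrib]
      rw [hsplit]
      have hsub : ∑ k ∈ F, (gammaNorm Γ (L k u)) ^ 2 ≤ fN u :=
        Finset.sum_le_sum_of_subset_of_nonneg (Finset.subset_univ F)
          (fun k _ _ => sq_nonneg _)
      linarith
    calc c0 * Real.exp (-(R ^ 2) - fN u)
        ≤ Ct⁻¹ ^ F.card *
          Real.exp (∑ k ∈ F, -((gammaNorm Γ (y k)) ^ 2 + (gammaNorm Γ (L k u)) ^ 2)) :=
          mul_le_mul hcoef hexp (Real.exp_pos _).le (le_trans hc00.le hcoef)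
      _ = _ := heq.symm
      _ ≤ postDensity ρ L y j u := hprod
  -- integrability
  have hlowmeas : Measurable (fun u => c0 * Real.exp (-(R ^ 2) - fN u)) :=
    ((measurable_const.sub hfNmeas).exp.const_mul c0)
  have hlowint : Integrable (fun u => c0 * Real.exp (-(R ^ 2) - fN u)) μp := by
    apply Integrable.mono' (integrable_const (c0 * Real.exp (-(R ^ 2))))
      hlowmeas.aestronglyMeasurable
    apply ae_of_all
    intro u
    rw [Real.norm_eq_abs, abs_of_nonneg (by positivity)]
    apply mul_le_mul_of_nonneg_left _ hc00.le
    apply Real.exp_le_exp.mpr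
    linarith [hfNnn u]
  have hgmeas : Measurable (postDensity ρ L y j) := pd_meas hρc hLmeas y j
  have hgint : Integrable (postDensity ρ L y j) μp := by
    apply Integrable.mono' (integrable_const ((max 1 Cb) ^ N)) hgmeas.aestronglyMeasurable
    apply ae_of_all
    intro u
    rw [Real.norm_eq_abs, abs_of_nonneg (pd_pos hρ y j u).le]
    exact pd_le hρ y j u
  -- lower bound on ∫ exp (-fN)
  have hexpint : Integrable (fun u => Real.exp (-fN u)) μp := by
    apply Integrable.mono' (integrable_const 1)
      (hfNmeas.neg.exp.aestronglyMeasurable)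
    apply ae_of_all
    intro u
    rw [Real.norm_eq_abs, abs_of_nonneg (Real.exp_pos _).le]
    exact Real.exp_le_one_iff.mpr (neg_nonpos.mpr (hfNnn u))
  have hBmeas : MeasurableSet {u : X | a ≤ fN u} := measurableSet_le measurable_const hfNmeas
  have hMark : a * (μp {u | a ≤ fN u}).toReal ≤ Mf :=
    mul_meas_ge_le_integral_of_nonneg (ae_of_all _ hfNnn) hfNint a
  have hmB : (μp {u | a ≤ fN u}).toReal ≤ 1 / 2 := by
    nlinarith [ENNReal.toReal_nonneg (a := μp {u | a ≤ fN u})]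
  have hAeq : {u : X | fN u < a} = {u : X | a ≤ fN u}ᶜ := by
    ext u; simp [not_le]
  have hμA : 1 / 2 ≤ (μp {u : X | fN u < a}).toReal := by
    rw [hAeq, measure_compl hBmeas (measure_ne_top μp _), measure_univ,
      ENNReal.toReal_sub_of_le prob_le_one (by simp)]
    simp only [ENNReal.toReal_one]
    linarith
  have hAm : MeasurableSet {u : X | fN u < a} := measurableSet_lt hfNmeas measurable_const
  have hind : ∀ u, ({u : X | fN u < a}).indicator (fun _ => Real.exp (-a)) u
      ≤ Real.exp (-fN u) := by
    intro u
    rw [Set.indicator_apply]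
    split_ifs with h
    · exact Real.exp_le_exp.mpr (by simpa using (le_of_lt h))
    · exact (Real.exp_pos _).le
  have hindint : Integrable (({u : X | fN u < a}).indicator (fun _ => Real.exp (-a))) μp :=
    (integrable_const _).indicator hAm
  have hexplow : Real.exp (-a) / 2 ≤ ∫ u, Real.exp (-fN u) ∂μp := by
    have h1 : ∫ u, ({u : X | fN u < a}).indicator (fun _ => Real.exp (-a)) u ∂μp
        = (μp {u : X | fN u < a}).toReal * Real.exp (-a) := by
      rw [integral_indicator_const _ hAm]; simp [smul_eq_mul, measureReal_def]
    have h2 := integral_mono hindint hexpint hind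
    rw [h1] at h2
    refine le_trans ?_ h2
    calc Real.exp (-a) / 2 = (1 / 2) * Real.exp (-a) := by ring
      _ ≤ (μp {u : X | fN u < a}).toReal * Real.exp (-a) :=
        mul_le_mul_of_nonneg_right hμA (Real.exp_pos _).le
  -- put it together
  have hint1 : ∫ u, c0 * Real.exp (-(R ^ 2) - fN u) ∂μp
      = c0 * Real.exp (-(R ^ 2)) * ∫ u, Real.exp (-fN u) ∂μp := by
    have : ∀ u, c0 * Real.exp (-(R ^ 2) - fN u)
        = (c0 * Real.exp (-(R ^ 2))) * Real.exp (-fN u) := by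
      intro u
      rw [sub_eq_add_neg, Real.exp_add]; ring
    simp_rw [this]
    rw [integral_const_mul]
  have hfinal := integral_mono hlowint hgint hglow
  rw [hint1] at hfinal
  refine le_trans ?_ hfinal
  exact mul_le_mul_of_nonneg_left hexplow (by positivity)

end Helpers2


section Helpers3

variable {X : Type*} [TopologicalSpace X] [MeasurableSpace X] [OpensMeasurableSpace X]
  {d N : ℕ} {Γ : Matrix (Fin d) (Fin d) ℝ} {ρ : (Fin d → ℝ) → ℝ} {Lρ Cb Ct : ℝ}
  {L : Fin N → X → Fin d → ℝ}

lemma integral_map_posteriorK (hρc : Continuous ρ) (hLmeas : ∀ k, Measurable (L k))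
    (μp : Measure X) (y : Fin N → Fin d → ℝ) (j : ℕ)
    (hZpos : 0 < postZ μp ρ L y j) (hpdnn : ∀ u, 0 ≤ postDensity ρ L y j u)
    (Sτ : X → X) (hSτ : Measurable Sτ) (Φ : X → ℝ) (hΦc : Continuous Φ) :
    ∫ v, Φ v ∂((posteriorK μp ρ L y j).map Sτ)
      = ∫ u, (postDensity ρ L y j u / postZ μp ρ L y j) * Φ (Sτ u) ∂μp := by
  rw [posteriorK, integral_map hSτ.aemeasurable hΦc.aestronglyMeasurable]
  have hmeas : Measurable fun u => Real.toNNReal (postDensity ρ L y j u / postZ μp ρ L y j) :=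
    ((pd_meas hρc hLmeas y j).div_const _).real_toNNReal
  have heq : (fun u => ENNReal.ofReal (postDensity ρ L y j u / postZ μp ρ L y j))
      = fun u => ((Real.toNNReal (postDensity ρ L y j u / postZ μp ρ L y j) : NNReal) : ℝ≥0∞) :=
    rfl
  rw [heq, integral_withDensity_eq_integral_smul hmeas]
  congr 1
  ext u
  have hq : 0 ≤ postDensity ρ L y j u / postZ μp ρ L y j :=
    div_nonneg (hpdnn u) hZpos.le
  simp [NNReal.smul_def, Real.coe_toNNReal _ hq]

end Helpers3


/-- **Lemma 4.6: stability of the smoothing/prediction distributions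
`ν^{y_{1:j}}_τ = (S_τ)_# μ^{y_{1:j}}` with respect to the measurements.** -/
theorem smoothing_stability
    {X : Type*} [NormedAddCommGroup X] [NormedSpace ℝ X] [CompleteSpace X]
    [TopologicalSpace.SeparableSpace X] [MeasurableSpace X] [BorelSpace X]
    {d N : ℕ} (hN : 0 < N)
    (Γ : Matrix (Fin d) (Fin d) ℝ) (hΓ : Γ.PosDef)
    (ρ : (Fin d → ℝ) → ℝ) (Lρ Cb Ct : ℝ) (hρ : IsNoiseDensity Γ ρ Lρ Cb Ct)
    (μp : Measure X) [IsProbabilityMeasure μp]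
    (hmom : Integrable (fun u => ‖u‖) μp)
    (T : ℝ) (hT : 0 < T)
    (ts : Fin (N + 1) → ℝ) (hts : StrictMono ts)
    (hts0 : ts 0 = 0) (htsN : ts (Fin.last N) = T)
    (S : ℝ → X → X) (hSmeas : Measurable fun p : ℝ × X => S p.1 p.2)
    (B : ℝ) (hB : 0 < B)
    (hSbd : ∀ t ∈ Set.Icc (0 : ℝ) T, ∀ u : X, ‖S t u‖ ≤ B * ‖u‖)
    (L : Fin N → X → Fin d → ℝ) (hLmeas : ∀ j, Measurable (L j))
    (hL2 : ∀ j, Integrable (fun u => (gammaNorm Γ (L j u)) ^ 2) μp) :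
    ∀ R > 0, ∃ C > 0,
      ∀ j : ℕ, 1 ≤ j → j ≤ N →
      ∀ y y' : Fin N → Fin d → ℝ,
        Real.sqrt (∑ k ∈ Finset.univ.filter (fun k : Fin N => (k : ℕ) < j),
            (gammaNorm Γ (y k)) ^ 2) ≤ R →
        Real.sqrt (∑ k ∈ Finset.univ.filter (fun k : Fin N => (k : ℕ) < j),
            (gammaNorm Γ (y' k)) ^ 2) ≤ R →
        (∀ τ ∈ Set.Icc (0 : ℝ) T,
          W1 ((posteriorK μp ρ L y j).map (S τ)) ((posteriorK μp ρ L y' j).map (S τ))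
            ≤ C * Real.sqrt (∑ k ∈ Finset.univ.filter (fun k : Fin N => (k : ℕ) < j),
                (gammaNorm Γ (y k - y' k)) ^ 2)) ∧
        ∀ t δt : ℝ, 0 ≤ t → 0 ≤ δt → t + δt ≤ T →
          (∫ τ in t..(t + δt),
              W1 ((posteriorK μp ρ L y j).map (S τ)) ((posteriorK μp ρ L y' j).map (S τ)))
            ≤ C * δt * Real.sqrt (∑ k ∈ Finset.univ.filter (fun k : Fin N => (k : ℕ) < j),
                (gammaNorm Γ (y k - y' k)) ^ 2) := by
  classical
  have hρc : Continuous ρ := continuous_of_lip hρ.lip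
  set M : ℝ := max 1 Cb with hMdef
  have hM1 : (1:ℝ) ≤ M := le_max_left _ _
  have hM0 : (0:ℝ) < M := lt_of_lt_of_le one_pos hM1
  intro R hR
  obtain ⟨zc, hzc0, hZbound⟩ :
      ∃ zc : ℝ, 0 < zc ∧ ∀ (j : ℕ) (w : Fin N → Fin d → ℝ),
        Real.sqrt (∑ k ∈ Finset.univ.filter (fun k : Fin N => (k : ℕ) < j),
          (gammaNorm Γ (w k)) ^ 2) ≤ R → zc ≤ postZ μp ρ L w j := by
    refine ⟨(min 1 Ct⁻¹) ^ N * Real.exp (-(R ^ 2)) *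
      (Real.exp (-(2 * ((∫ u, ∑ k, (gammaNorm Γ (L k u)) ^ 2 ∂μp) + 1))) / 2), ?_, ?_⟩
    · have hm0 : 0 < min 1 Ct⁻¹ := lt_min one_pos (inv_pos.mpr hρ.Ct_pos)
      positivity
    · intro j w hw
      exact postZ_ge hΓ hρ μp hLmeas hL2 j R w hw
  set m₁ : ℝ := ∫ u, ‖u‖ ∂μp with hm₁def
  have hm₁0 : 0 ≤ m₁ := integral_nonneg fun u => norm_nonneg u
  set Kc : ℝ := Lρ * N * M ^ N with hKcdef
  have hKc0 : 0 ≤ Kc :=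
    mul_nonneg (mul_nonneg hρ.Lρ_pos.le (Nat.cast_nonneg N)) (pow_nonneg hM0.le N)
  set Q : ℝ := Kc * (zc⁻¹ + M ^ N / (zc * zc)) with hQdef
  have hQ0 : 0 ≤ Q := mul_nonneg hKc0 (add_nonneg (inv_nonneg.mpr hzc0.le)
    (div_nonneg (pow_nonneg hM0.le _) (mul_nonneg hzc0.le hzc0.le)))
  have hC0 : 0 < 1 + B * (m₁ + 1) * Q :=
    add_pos_of_pos_of_nonneg one_pos
      (mul_nonneg (mul_nonneg hB.le (by linarith)) hQ0)
  refine ⟨1 + B * (m₁ + 1) * Q, hC0, ?_⟩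
  intro j hj1 hjN y y' hy hy'
  set F := Finset.univ.filter (fun k : Fin N => (k : ℕ) < j) with hFdef
  set s : ℝ := Real.sqrt (∑ k ∈ F, (gammaNorm Γ (y k - y' k)) ^ 2) with hsdef
  have hs0 : 0 ≤ s := Real.sqrt_nonneg _
  have hZy : zc ≤ postZ μp ρ L y j := hZbound j y hy
  have hZy' : zc ≤ postZ μp ρ L y' j := hZbound j y' hy'
  have hZyp : 0 < postZ μp ρ L y j := lt_of_lt_of_le hzc0 hZy
  have hZy'p : 0 < postZ μp ρ L y' j := lt_of_lt_of_le hzc0 hZy'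
  have hgint : ∀ w : Fin N → Fin d → ℝ, Integrable (postDensity ρ L w j) μp := by
    intro w
    apply Integrable.mono' (integrable_const (M ^ N))
      ((pd_meas hρc hLmeas w j).aestronglyMeasurable)
    apply ae_of_all
    intro u
    rw [Real.norm_eq_abs, abs_of_nonneg (pd_pos hρ w j u).le]
    exact pd_le hρ w j u
  have hZdiff : |postZ μp ρ L y j - postZ μp ρ L y' j| ≤ Kc * s := by
    have h1 : postZ μp ρ L y j - postZ μp ρ L y' j
        = ∫ u, (postDensity ρ L y j u - postDensity ρ L y' j u) ∂μp := by
      rw [integral_sub (hgint y) (hgint y')]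
      rfl
    rw [h1]
    calc |∫ u, (postDensity ρ L y j u - postDensity ρ L y' j u) ∂μp|
        ≤ ∫ u, |postDensity ρ L y j u - postDensity ρ L y' j u| ∂μp := by
          simpa [Real.norm_eq_abs] using
            norm_integral_le_integral_norm (fun u => postDensity ρ L y j u - postDensity ρ L y' j u) (μ := μp)
      _ ≤ ∫ _u, Kc * s ∂μp :=
          integral_mono ((hgint y).sub (hgint y')).abs (integrable_const _)
            (fun u => pd_diff hΓ hρ y y' j u)
      _ = Kc * s := by simp
  have hpart1 : ∀ τ ∈ Set.Icc (0:ℝ) T,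
      W1 ((posteriorK μp ρ L y j).map (S τ)) ((posteriorK μp ρ L y' j).map (S τ))
        ≤ (1 + B * (m₁ + 1) * Q) * s := by
    intro τ hτ
    have hSτ : Measurable (S τ) := hSmeas.comp (measurable_const.prodMk measurable_id)
    have hmem : (0:ℝ) ∈ {r : ℝ | ∃ Φ : X → ℝ, LipschitzWith 1 Φ ∧ Φ 0 = 0 ∧
        r = (∫ u, Φ u ∂((posteriorK μp ρ L y j).map (S τ)))
          - ∫ u, Φ u ∂((posteriorK μp ρ L y' j).map (S τ))} :=
      ⟨fun _ => (0:ℝ), LipschitzWith.const' (0:ℝ), rfl, by simp⟩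
    refine csSup_le ⟨0, hmem⟩ ?_
    rintro r ⟨Φ, hΦlip, hΦ0, hreq⟩
    have hΦc : Continuous Φ := hΦlip.continuous
    have hΦbd : ∀ x : X, |Φ x| ≤ ‖x‖ := by
      intro x
      have h := hΦlip.dist_le_mul x 0
      simpa [hΦ0, Real.dist_eq, dist_zero_right] using h
    have hΦS : ∀ u, |Φ (S τ u)| ≤ B * ‖u‖ := fun u =>
      le_trans (hΦbd _) (hSbd τ hτ u)
    have hrw : ∀ w : Fin N → Fin d → ℝ, 0 < postZ μp ρ L w j →
        (∫ v, Φ v ∂((posteriorK μp ρ L w j).map (S τ)))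
          = ∫ u, (postDensity ρ L w j u / postZ μp ρ L w j) * Φ (S τ u) ∂μp :=
      fun w hw => integral_map_posteriorK hρc hLmeas μp w j hw
        (fun u => (pd_pos hρ w j u).le) (S τ) hSτ Φ hΦc
    have hint : ∀ w : Fin N → Fin d → ℝ, 0 < postZ μp ρ L w j → zc ≤ postZ μp ρ L w j →
        Integrable (fun u => (postDensity ρ L w j u / postZ μp ρ L w j) * Φ (S τ u)) μp := by
      intro w hwp hwz
      apply Integrable.mono' (hmom.const_mul (M ^ N / zc * B))
        ((((pd_meas hρc hLmeas w j).div_const _).mul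
          (hΦc.measurable.comp hSτ)).aestronglyMeasurable)
      apply ae_of_all
      intro u
      rw [Real.norm_eq_abs, Pi.mul_apply, Function.comp_apply, abs_mul]
      have h1 : |postDensity ρ L w j u / postZ μp ρ L w j| ≤ M ^ N / zc := by
        rw [abs_of_nonneg (div_nonneg (pd_pos hρ w j u).le hwp.le)]
        exact div_le_div₀ (pow_nonneg hM0.le N) (pd_le hρ w j u) hzc0 hwz
      calc |postDensity ρ L w j u / postZ μp ρ L w j| * |Φ (S τ u)|
          ≤ (M ^ N / zc) * (B * ‖u‖) :=
            mul_le_mul h1 (hΦS u) (abs_nonneg _) (div_nonneg (pow_nonneg hM0.le N) hzc0.le)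
        _ = M ^ N / zc * B * ‖u‖ := by ring
    have hI1 := hint y hZyp hZy
    have hI2 := hint y' hZy'p hZy'
    rw [hreq, hrw y hZyp, hrw y' hZy'p, ← integral_sub hI1 hI2]
    set KD : ℝ := Kc * s / zc + M ^ N * (Kc * s) / (zc * zc) with hKDdef
    have hKD0 : 0 ≤ KD := add_nonneg (div_nonneg (mul_nonneg hKc0 hs0) hzc0.le)
      (div_nonneg (mul_nonneg (pow_nonneg hM0.le _) (mul_nonneg hKc0 hs0))
        (mul_nonneg hzc0.le hzc0.le))
    have hptKD : ∀ u, |postDensity ρ L y j u / postZ μp ρ L y j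
        - postDensity ρ L y' j u / postZ μp ρ L y' j| ≤ KD := by
      intro u
      have e : postDensity ρ L y j u / postZ μp ρ L y j
            - postDensity ρ L y' j u / postZ μp ρ L y' j
          = (postDensity ρ L y j u - postDensity ρ L y' j u) / postZ μp ρ L y j
            + postDensity ρ L y' j u * (postZ μp ρ L y' j - postZ μp ρ L y j)
              / (postZ μp ρ L y j * postZ μp ρ L y' j) := by
        field_simp
        ring
      rw [e]
      refine le_trans (abs_add_le _ _) (add_le_add ?_ ?_)
      · rw [abs_div, abs_of_pos hZyp]
        exact div_le_div₀ (mul_nonneg hKc0 hs0) (pd_diff hΓ hρ y y' j u) hzc0 hZy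
      · rw [abs_div, abs_of_pos (mul_pos hZyp hZy'p), abs_mul]
        apply div_le_div₀ (mul_nonneg (pow_nonneg hM0.le _) (mul_nonneg hKc0 hs0)) ?_
          (mul_pos hzc0 hzc0) (mul_le_mul hZy hZy' hzc0.le hZyp.le)
        apply mul_le_mul ?_ ?_ (abs_nonneg _) (pow_nonneg hM0.le _)
        · rw [abs_of_pos (pd_pos hρ y' j u)]
          exact pd_le hρ y' j u
        · rw [abs_sub_comm]
          exact hZdiff
    have hpt : ∀ u, |(postDensity ρ L y j u / postZ μp ρ L y j) * Φ (S τ u)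
        - (postDensity ρ L y' j u / postZ μp ρ L y' j) * Φ (S τ u)| ≤ (KD * B) * ‖u‖ := by
      intro u
      have e2 : (postDensity ρ L y j u / postZ μp ρ L y j) * Φ (S τ u)
            - (postDensity ρ L y' j u / postZ μp ρ L y' j) * Φ (S τ u)
          = (postDensity ρ L y j u / postZ μp ρ L y j
              - postDensity ρ L y' j u / postZ μp ρ L y' j) * Φ (S τ u) := by ring
      rw [e2, abs_mul]
      calc |postDensity ρ L y j u / postZ μp ρ L y j
            - postDensity ρ L y' j u / postZ μp ρ L y' j| * |Φ (S τ u)|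
          ≤ KD * (B * ‖u‖) := mul_le_mul (hptKD u) (hΦS u) (abs_nonneg _) hKD0
        _ = (KD * B) * ‖u‖ := by ring
    refine le_trans (le_abs_self _) ?_
    calc |∫ u, ((postDensity ρ L y j u / postZ μp ρ L y j) * Φ (S τ u)
          - (postDensity ρ L y' j u / postZ μp ρ L y' j) * Φ (S τ u)) ∂μp|
        ≤ ∫ u, |(postDensity ρ L y j u / postZ μp ρ L y j) * Φ (S τ u)
            - (postDensity ρ L y' j u / postZ μp ρ L y' j) * Φ (S τ u)| ∂μp := by
          simpa [Real.norm_eq_abs] using norm_integral_le_integral_norm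
            (fun u => (postDensity ρ L y j u / postZ μp ρ L y j) * Φ (S τ u)
              - (postDensity ρ L y' j u / postZ μp ρ L y' j) * Φ (S τ u)) (μ := μp)
      _ ≤ ∫ u, (KD * B) * ‖u‖ ∂μp :=
          integral_mono (hI1.sub hI2).abs (hmom.const_mul _) hpt
      _ = (KD * B) * m₁ := by rw [integral_const_mul]
      _ ≤ (1 + B * (m₁ + 1) * Q) * s := by
          have hKDQ : KD = Q * s := by
            rw [hKDdef, hQdef]
            field_simp
          rw [hKDQ]
          nlinarith [mul_nonneg (mul_nonneg hB.le hQ0) hs0, hs0,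
            mul_nonneg hQ0 hs0, mul_nonneg (mul_nonneg hQ0 hs0) hB.le]
  refine ⟨hpart1, ?_⟩
  intro t δt ht hδt hsum
  set f : ℝ → ℝ := fun τ =>
    W1 ((posteriorK μp ρ L y j).map (S τ)) ((posteriorK μp ρ L y' j).map (S τ)) with hfdef
  by_cases hI : IntervalIntegrable f MeasureTheory.volume t (t + δt)
  · have hmono := intervalIntegral.integral_mono_on (by linarith : t ≤ t + δt) hI
      (intervalIntegrable_const (c := (1 + B * (m₁ + 1) * Q) * s))
      (fun τ hτ => hpart1 τ ⟨by linarith [hτ.1], by linarith [hτ.2]⟩)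
    rw [intervalIntegral.integral_const] at hmono
    calc (∫ τ in t..(t + δt), f τ) ≤ (t + δt - t) • ((1 + B * (m₁ + 1) * Q) * s) := hmono
      _ = (1 + B * (m₁ + 1) * Q) * δt * s := by
          simp only [add_sub_cancel_left, smul_eq_mul]
          ring
  · rw [intervalIntegral.integral_undef hI]
    have : 0 ≤ (1 + B * (m₁ + 1) * Q) * δt * s :=
      mul_nonneg (mul_nonneg hC0.le hδt) hs0
    linarith
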